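/- arXiv:0801.0667 — 4 statements merged into one kernel-verified Lean document; each statement's English description precedes it below -/
import Mathlib

section
/- With the setup of a finite graph (V, E, involution x ↦ x̄, maps o, t with o(x̄) = t(x), o surjective) and an abelian group M with no (n₀ - n₁)-torsion (where n₀ = |V| and n₁ = |E|/2), any function λ : E → M and element σ ∈ M satisfying the flow relations (∑_{o(x)=v} λ(x) = σ for every v ∈ V, and λ(x) + λ(x̄) = σ for every x ∈ E) must have σ = 0. -/
/-- With the same graph setup, if M has no (n₀ - n₁)-torsion then any σ-flow
(λ, σ) satisfying the flow relations must have σ = 0. -/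
theorem stmt_1 {V E : Type*} [Fintype V] [Fintype E] [DecidableEq V]
    (bar : E → E) (o t : E → V)
    (hinv : ∀ x, bar (bar x) = x) (hfree : ∀ x, bar x ≠ x)
    (hot : ∀ x, o (bar x) = t x)
    {M : Type*} [AddCommGroup M]
    (n0 n1 : ℕ) (hn0 : n0 = Fintype.card V) (hn1 : 2 * n1 = Fintype.card E)
    (htor : ∀ m : M, ((n0 : ℤ) - (n1 : ℤ)) • m = 0 → m = 0)
    (lam : E → M) (σ : M)
    (ha : ∀ v : V, ∑ x ∈ Finset.univ.filter (fun x => o x = v), lam x = σ)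
    (hb : ∀ x : E, lam x + lam (bar x) = σ)
    (hsurj : Function.Surjective o) :
    σ = 0 := by
  classical
  set e := (Fintype.equivFin E) with he
  set S : Finset E := Finset.univ.filter (fun x => e x < e (bar x)) with hS
  have hmem : ∀ x, x ∈ S ↔ e x < e (bar x) := by
    intro x; simp [hS]
  have hne : ∀ x : E, e x ≠ e (bar x) := by
    intro x h
    exact hfree x (e.injective h.symm)
  have hcompl : ∀ x, x ∈ Sᶜ ↔ e (bar x) < e x := by
    intro x
    simp only [Finset.mem_compl, hmem]
    constructor
    · intro h; exact lt_of_le_of_ne (not_lt.mp h) (hne x).symm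
    · intro h; exact not_lt.mpr h.le
  -- bar maps S bijectively onto Sᶜ
  have hbarmem : ∀ x ∈ S, bar x ∈ Sᶜ := by
    intro x hx
    rw [hcompl, hinv]; exact (hmem x).mp hx
  have hbarmem' : ∀ x ∈ Sᶜ, bar x ∈ S := by
    intro x hx
    rw [hmem, hinv]; exact (hcompl x).mp hx
  have hsum : ∑ x ∈ S, lam (bar x) = ∑ x ∈ Sᶜ, lam x := by
    exact Finset.sum_nbij' bar bar hbarmem hbarmem'
      (fun x _ => hinv x) (fun x _ => hinv x) (fun x _ => rfl)
  have hcard : S.card = Sᶜ.card := by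
    exact Finset.card_nbij' bar bar hbarmem hbarmem'
      (fun x _ => hinv x) (fun x _ => hinv x)
  have hcardS : S.card = n1 := by
    have h2 : S.card + Sᶜ.card = Fintype.card E := by
      rw [Finset.card_add_card_compl]
    omega
  -- total sum equals n0 • σ
  have htot : ∑ x : E, lam x = n0 • σ := by
    rw [← Finset.sum_fiberwise Finset.univ o lam]
    rw [hn0]
    rw [Finset.sum_congr rfl (fun v _ => ha v)]
    rw [Finset.sum_const, Finset.card_univ]
  -- total sum equals n1 • σ
  have htot2 : ∑ x : E, lam x = n1 • σ := by
    have : ∑ x ∈ S, (lam x + lam (bar x)) = ∑ x : E, lam x := by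
      rw [Finset.sum_add_distrib, hsum, ← Finset.sum_add_sum_compl S lam]
    rw [← this, Finset.sum_congr rfl (fun x _ => hb x), Finset.sum_const, hcardS]
  apply htor
  have : ((n0 : ℤ) - (n1 : ℤ)) • σ = n0 • σ - n1 • σ := by
    rw [sub_zsmul, natCast_zsmul, natCast_zsmul]; abel
  rw [this, ← htot, ← htot2, sub_self]
end

section
/- Let (V, E) be a finite graph with reversal involution x ↦ x̄ and maps o, t with o(x̄) = t(x), and define (I - T*) on functions f : E → ℤ (equivalently on ℤE) by ((I - T*) applied to basis element x) = x + x̄ - ∑_{y : t(y) = o(x)} y. If α ∈ ℤ^{E₊} satisfies ∂α = 0 (α is a 1-cycle), and ᾱ denotes the image of α under the map induced by x ↦ x̄, then (I - T*)(α - ᾱ) = 0. -/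
/-- With (I - T*) given on basis elements by x ↦ x + x̄ - ∑_{y : t(y)=o(x)} y
(so on coefficient functions ((I-T*)f)(z) = f(z) + f(z̄) - ∑_{x : o(x)=t(z)} f(x)),
if α ∈ ℤ^{E₊} is a 1-cycle (∂α = 0) then (I - T*)(α - ᾱ) = 0, where α - ᾱ is the
coefficient function λ with λ(x) = n_x, λ(x̄) = -n_x for x ∈ E₊. -/
theorem stmt_4 {V E : Type*} [Fintype V] [Fintype E] [DecidableEq V] [DecidableEq E]
    (bar : E → E) (o t : E → V)
    (hinv : ∀ x, bar (bar x) = x) (hfree : ∀ x, bar x ≠ x)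
    (hot : ∀ x, o (bar x) = t x)
    (Ep : Finset E) (hEp : ∀ x, x ∈ Ep ↔ bar x ∉ Ep)
    (n : E → ℤ)
    (hcycle : ∀ v : V, (∑ x ∈ Ep.filter (fun x => t x = v), n x)
      - (∑ x ∈ Ep.filter (fun x => o x = v), n x) = 0)
    (lam : E → ℤ)
    (hlam : ∀ x : E, lam x = if x ∈ Ep then n x else - n (bar x)) :
    ∀ z : E, lam z + lam (bar z)
      - (∑ x ∈ Finset.univ.filter (fun x => o x = t z), lam x) = 0 := by
  intro z
  -- first: lam z + lam (bar z) = 0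
  have hpair : ∀ x : E, lam x + lam (bar x) = 0 := by
    intro x
    rw [hlam x, hlam (bar x), hinv x]
    by_cases hx : x ∈ Ep
    · have : bar x ∉ Ep := (hEp x).mp hx
      simp [hx, this]
    · have : bar x ∈ Ep := by
        by_contra h
        exact hx ((hEp x).mpr h)
      simp [hx, this]
  -- second: the sum over o x = v of lam is 0 for any v
  have hsum : ∀ v : V, (∑ x ∈ Finset.univ.filter (fun x => o x = v), lam x) = 0 := by
    intro v
    have hsplit : Finset.univ.filter (fun x => o x = v)
        = (Ep.filter (fun x => o x = v)) ∪
          ((Finset.univ \ Ep).filter (fun x => o x = v)) := by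
      ext x
      by_cases hx : x ∈ Ep <;> simp [hx]
    have hdisj : Disjoint (Ep.filter (fun x => o x = v))
        ((Finset.univ \ Ep).filter (fun x => o x = v)) := by
      rw [Finset.disjoint_left]
      intro a ha hb
      simp only [Finset.mem_filter, Finset.mem_sdiff] at ha hb
      exact hb.1.2 ha.1
    rw [hsplit, Finset.sum_union hdisj]
    have h1 : (∑ x ∈ Ep.filter (fun x => o x = v), lam x)
        = ∑ x ∈ Ep.filter (fun x => o x = v), n x := by
      apply Finset.sum_congr rfl
      intro x hx
      simp only [Finset.mem_filter] at hx
      rw [hlam x, if_pos hx.1]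
    have h2 : (∑ x ∈ (Finset.univ \ Ep).filter (fun x => o x = v), lam x)
        = - ∑ x ∈ Ep.filter (fun x => t x = v), n x := by
      rw [← Finset.sum_neg_distrib]
      apply Finset.sum_nbij' (i := fun x => bar x) (j := fun x => bar x)
      · intro a ha
        simp only [Finset.mem_filter, Finset.mem_sdiff, Finset.mem_univ, true_and] at ha ⊢
        constructor
        · by_contra h
          exact ha.1 ((hEp a).mpr h)
        · rw [← hot, hinv]; exact ha.2
      · intro a ha
        simp only [Finset.mem_filter, Finset.mem_sdiff, Finset.mem_univ, true_and] at ha ⊢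
        refine ⟨(hEp a).mp ha.1, ?_⟩
        rw [hot, ha.2]
      · intro a _; exact hinv a
      · intro a _; exact hinv a
      · intro a ha
        simp only [Finset.mem_filter, Finset.mem_sdiff] at ha
        rw [hlam a, if_neg ha.1.2]
    rw [h1, h2]
    linarith [hcycle v]
  rw [hpair z, hsum (t z)]; ring
end

section
/- Let (V, E) be a finite connected graph with reversal involution, incidence maps o, t (o(x̄) = t(x)), and suppose every vertex has degree at least 3 (i.e., |{x : o(x) = v}| ≥ 3 for all v). Define T : ℤ^E → ℤ^E by T(x) = ∑_{y : o(y)=t(x), y ≠ x̄} y. If α = ∑_{x ∈ E} λ(x)·x satisfies (T - I)α = 0, then the quantity σ(y) := λ(y) + λ(ȳ) is constant over all y ∈ E. -/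
/-- In a finite connected graph with every vertex of degree ≥ 3, if
α = ∑ λ(x)·x satisfies (T - I)α = 0 (coefficientwise:
∑_{x : t(x)=o(y), x ≠ ȳ} λ(x) - λ(y) = 0 for every y), then σ(y) = λ(y) + λ(ȳ)
is constant over all edges y. -/
theorem stmt_5 {V E : Type*} [Fintype V] [Fintype E] [DecidableEq V] [DecidableEq E]
    (bar : E → E) (o t : E → V)
    (hinv : ∀ x, bar (bar x) = x) (hfree : ∀ x, bar x ≠ x)
    (hot : ∀ x, o (bar x) = t x)
    (hconn : ∀ u v : V, Relation.ReflTransGen (fun a b => ∃ e : E, o e = a ∧ t e = b) u v)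
    (hdeg : ∀ v : V, 3 ≤ (Finset.univ.filter (fun x => o x = v)).card)
    (lam : E → ℤ)
    (hker : ∀ y : E,
      (∑ x ∈ Finset.univ.filter (fun x => t x = o y ∧ x ≠ bar y), lam x) - lam y = 0) :
    ∀ y z : E, lam y + lam (bar y) = lam z + lam (bar z) := by
  set S : V → ℤ := fun v => ∑ x ∈ Finset.univ.filter (fun x => t x = v), lam x with hS
  have htbar : ∀ y : E, t (bar y) = o y := by
    intro y
    have := hot (bar y)
    rw [hinv] at this
    exact this.symm
  have hsigma : ∀ y : E, lam y + lam (bar y) = S (o y) := by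
    intro y
    have hmem : bar y ∈ Finset.univ.filter (fun x => t x = o y) := by
      simp [htbar y]
    have herase : Finset.univ.filter (fun x => t x = o y ∧ x ≠ bar y)
        = (Finset.univ.filter (fun x => t x = o y)).erase (bar y) := by
      ext x
      simp [Finset.mem_erase, and_comm]
    have hk := hker y
    rw [herase] at hk
    have hadd := Finset.add_sum_erase _ lam hmem
    have : S (o y) = lam (bar y) + ∑ x ∈ (Finset.univ.filter (fun x => t x = o y)).erase (bar y), lam x := hadd.symm
    omega
  have hedge : ∀ e : E, S (o e) = S (t e) := by
    intro e
    have h1 := hsigma e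
    have h2 := hsigma (bar e)
    rw [hinv, hot] at h2
    omega
  have hconst : ∀ u v : V, S u = S v := by
    intro u v
    induction hconn u v with
    | refl => rfl
    | tail _ h ih =>
      obtain ⟨e, he1, he2⟩ := h
      rw [ih, ← he1, ← he2, hedge]
  intro y z
  rw [hsigma y, hsigma z, hconst]
end

section
/- Let (V, E) be a finite connected graph with reversal involution, every vertex of degree at least 3, and nonzero Euler characteristic χ = |V| - |E|/2. Define T : ℤ^E → ℤ^E by T(x) = ∑_{y : o(y)=t(x), y ≠ x̄} y. Then the map α ↦ α - ᾱ (where the bar extends x ↦ x̄ linearly) is a group isomorphism from H₁(G, ℤ) = ker(∂ : ℤ^{E₊} → ℤ^V) onto ker(T - I) ⊆ ℤ^E. -/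
open Finset

private lemma attach_filter_sum' {E : Type*} [DecidableEq E]
    (Ep : Finset E) (n : {x // x ∈ Ep} → ℤ) (h : E → ℤ)
    (hh : ∀ (x : E) (hx : x ∈ Ep), h x = n ⟨x, hx⟩)
    (p : E → Prop) [DecidablePred p] :
    ∑ x ∈ Ep.attach.filter (fun x => p x.1), n x = ∑ x ∈ Ep.filter p, h x := by
  rw [Finset.sum_filter, Finset.sum_filter,
    ← Finset.sum_attach Ep (fun x => if p x then h x else 0)]
  refine Finset.sum_congr rfl fun x _ => ?_
  by_cases hp : p x.1 <;> simp [hp, hh x.1 x.2]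

private lemma split_sum' {V E : Type*} [Fintype E] [DecidableEq V] [DecidableEq E]
    (bar : E → E) (o t : E → V)
    (hinv : ∀ x, bar (bar x) = x)
    (hot : ∀ x, o (bar x) = t x)
    (Ep : Finset E) (hEp : ∀ x, x ∈ Ep ↔ bar x ∉ Ep)
    (h : E → ℤ) (hbar : ∀ x, h (bar x) = - h x) (v : V) :
    ∑ x ∈ univ.filter (fun x => t x = v), h x
      = ∑ x ∈ Ep.filter (fun x => t x = v), h x - ∑ x ∈ Ep.filter (fun x => o x = v), h x := by
  have htb : ∀ x, t (bar x) = o x := fun x => by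
    have := hot (bar x); rw [hinv] at this; exact this.symm
  have hmem : ∀ x, x ∉ Ep → bar x ∈ Ep := fun x hx => by
    by_contra hb
    exact hx ((hEp x).mpr hb)
  have key : ∑ x ∈ (univ.filter (fun x => t x = v)).filter (fun x => x ∉ Ep), h x
      = ∑ x ∈ Ep.filter (fun x => o x = v), - h x := by
    refine Finset.sum_nbij' (i := bar) (j := bar) ?_ ?_ ?_ ?_ ?_
    · intro a ha
      simp only [Finset.mem_filter, Finset.mem_univ, true_and] at ha ⊢
      exact ⟨hmem a ha.2, by rw [hot, ha.1]⟩
    · intro a ha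
      simp only [Finset.mem_filter, Finset.mem_univ, true_and] at ha ⊢
      exact ⟨by rw [htb, ha.2], (hEp a).mp ha.1⟩
    · intro a _; exact hinv a
    · intro a _; exact hinv a
    · intro a _; rw [hbar, neg_neg]
  have hsplit := Finset.sum_filter_add_sum_filter_not
    (univ.filter (fun x => t x = v)) (fun x => x ∈ Ep) h
  have e1 : (univ.filter (fun x => t x = v)).filter (fun x => x ∈ Ep)
      = Ep.filter (fun x => t x = v) := by
    ext x; simp [and_comm]
  rw [e1, key, Finset.sum_neg_distrib] at hsplit
  linarith [hsplit]

/-- For a finite connected graph with all vertex degrees ≥ 3 and nonzero Euler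
characteristic, the map α ↦ α - ᾱ is a group isomorphism from
H₁(G, ℤ) = ker(∂ : ℤ^{E₊} → ℤ^V) onto ker(T - I) ⊆ ℤ^E, where
T(x) = ∑_{y : o(y)=t(x), y ≠ x̄} y, i.e. (T f)(z) = ∑_{x : t(x)=o(z)} f(x) - f(z̄).
The map Φ is characterized by Φ(n)(x) = n(x), Φ(n)(x̄) = -n(x) for x ∈ E₊; it is additive,
maps cycles to ker(T - I), and is injective and surjective between those groups. -/
theorem stmt_6 {V E : Type*} [Fintype V] [Fintype E] [DecidableEq V] [DecidableEq E]
    (bar : E → E) (o t : E → V)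
    (hinv : ∀ x, bar (bar x) = x) (hfree : ∀ x, bar x ≠ x)
    (hot : ∀ x, o (bar x) = t x)
    (hconn : ∀ u v : V, Relation.ReflTransGen (fun a b => ∃ e : E, o e = a ∧ t e = b) u v)
    (hdeg : ∀ v : V, 3 ≤ (Finset.univ.filter (fun x => o x = v)).card)
    (hchi : 2 * Fintype.card V ≠ Fintype.card E)
    (Ep : Finset E) (hEp : ∀ x, x ∈ Ep ↔ bar x ∉ Ep)
    (Φ : ({x // x ∈ Ep} → ℤ) → (E → ℤ))
    (hΦ1 : ∀ (n : {x // x ∈ Ep} → ℤ) (x : E) (hx : x ∈ Ep), Φ n x = n ⟨x, hx⟩)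
    (hΦ2 : ∀ (n : {x // x ∈ Ep} → ℤ) (x : E) (hx : x ∈ Ep), Φ n (bar x) = - n ⟨x, hx⟩) :
    (∀ n m : {x // x ∈ Ep} → ℤ, Φ (n + m) = Φ n + Φ m) ∧
    (∀ n : {x // x ∈ Ep} → ℤ,
      (∀ v : V, (∑ x ∈ Ep.attach.filter (fun x => t x.1 = v), n x)
        - (∑ x ∈ Ep.attach.filter (fun x => o x.1 = v), n x) = 0) →
      (∀ z : E, (∑ x ∈ Finset.univ.filter (fun x => t x = o z), Φ n x) - Φ n (bar z) = Φ n z)) ∧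
    (∀ n m : {x // x ∈ Ep} → ℤ,
      (∀ v : V, (∑ x ∈ Ep.attach.filter (fun x => t x.1 = v), n x)
        - (∑ x ∈ Ep.attach.filter (fun x => o x.1 = v), n x) = 0) →
      (∀ v : V, (∑ x ∈ Ep.attach.filter (fun x => t x.1 = v), m x)
        - (∑ x ∈ Ep.attach.filter (fun x => o x.1 = v), m x) = 0) →
      Φ n = Φ m → n = m) ∧
    (∀ f : E → ℤ,
      (∀ z : E, (∑ x ∈ Finset.univ.filter (fun x => t x = o z), f x) - f (bar z) = f z) →
      ∃ n : {x // x ∈ Ep} → ℤ,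
        (∀ v : V, (∑ x ∈ Ep.attach.filter (fun x => t x.1 = v), n x)
          - (∑ x ∈ Ep.attach.filter (fun x => o x.1 = v), n x) = 0) ∧ Φ n = f) := by
  have hmem : ∀ x : E, x ∉ Ep → bar x ∈ Ep := fun x hx => by
    by_contra hb; exact hx ((hEp x).mpr hb)
  have htb : ∀ x, t (bar x) = o x := fun x => by
    have := hot (bar x); rw [hinv] at this; exact this.symm
  have hΦbar : ∀ (n : {x // x ∈ Ep} → ℤ) (z : E), Φ n (bar z) = - Φ n z := by
    intro n z
    by_cases hz : z ∈ Ep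
    · rw [hΦ2 n z hz, hΦ1 n z hz]
    · have hb : bar z ∈ Ep := hmem z hz
      have h2 := hΦ2 n (bar z) hb
      rw [hinv] at h2
      rw [h2, hΦ1 n (bar z) hb, neg_neg]
  refine ⟨?_, ?_, ?_, ?_⟩
  · -- additivity
    intro n m
    funext z
    by_cases hz : z ∈ Ep
    · rw [hΦ1 (n + m) z hz]; simp [hΦ1 n z hz, hΦ1 m z hz]
    · have hb : bar z ∈ Ep := hmem z hz
      have e : ∀ k : {x // x ∈ Ep} → ℤ, Φ k z = - k ⟨bar z, hb⟩ := by
        intro k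
        have := hΦ2 k (bar z) hb; rwa [hinv] at this
      rw [e (n + m)]; simp [e n, e m]; ring
  · -- cycles to ker (T - I)
    intro n hcyc z
    have hv : ∑ x ∈ univ.filter (fun x => t x = o z), Φ n x = 0 := by
      rw [split_sum' bar o t hinv hot Ep hEp (Φ n) (hΦbar n) (o z)]
      rw [← attach_filter_sum' Ep n (Φ n) (fun x hx => hΦ1 n x hx) (fun x => t x = o z),
        ← attach_filter_sum' Ep n (Φ n) (fun x hx => hΦ1 n x hx) (fun x => o x = o z)]
      exact hcyc (o z)
    rw [hv, hΦbar n z]; ring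
  · -- injectivity
    intro n m _ _ hmn
    funext x
    have := congrFun hmn x.1
    rw [hΦ1 n x.1 x.2, hΦ1 m x.1 x.2] at this
    simpa using this
  · -- surjectivity
    intro f hf
    set g : V → ℤ := fun v => ∑ x ∈ univ.filter (fun x => t x = v), f x with hg
    have hgo : ∀ z, g (o z) = f z + f (bar z) := by
      intro z; have := hf z; simp only [hg]; linarith
    have hedge : ∀ e : E, g (o e) = g (t e) := by
      intro e
      rw [← hot e, hgo (bar e), hgo e, hinv]
      ring
    have hconst : ∀ u w : V, g u = g w := by
      intro u w
      induction hconn u w with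
      | refl => rfl
      | tail _ hstep ih =>
        obtain ⟨e, he1, he2⟩ := hstep
        rw [ih, ← he1, ← he2, hedge e]
    -- card E = 2 * card Ep
    have hcardc : Epᶜ.card = Ep.card := by
      refine Finset.card_nbij' (i := bar) (j := bar) ?_ ?_ ?_ ?_
      · intro a ha
        simp only [Finset.mem_coe, Finset.mem_compl] at ha
        exact hmem a ha
      · intro a ha
        simp only [Finset.mem_coe, Finset.mem_compl]
        exact (hEp a).mp ha
      · intro a _; exact hinv a
      · intro a _; exact hinv a
    have hcard : Fintype.card E = 2 * Ep.card := by
      have := Finset.card_add_card_compl Ep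
      omega
    have hVEp : Fintype.card V ≠ Ep.card := by
      intro h; apply hchi; rw [hcard, h]
    -- total sum identity
    have htotal : ∑ v : V, g v = ∑ x : E, f x := by
      simp only [hg]
      exact Finset.sum_fiberwise _ _ _
    have hsplitE : ∑ x : E, f x = ∑ x ∈ Ep, (f x + f (bar x)) := by
      have hc : ∑ x ∈ Epᶜ, f x = ∑ x ∈ Ep, f (bar x) := by
        refine Finset.sum_nbij' (i := bar) (j := bar) ?_ ?_ ?_ ?_ ?_
        · intro a ha; simp only [Finset.mem_compl] at ha; exact hmem a ha
        · intro a ha; simp only [Finset.mem_compl]; exact (hEp a).mp ha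
        · intro a _; exact hinv a
        · intro a _; exact hinv a
        · intro a ha; rw [hinv]
      rw [Finset.sum_add_distrib, ← hc]
      rw [← Finset.sum_add_sum_compl Ep f]
    have hgzero : ∀ v : V, g v = 0 := by
      intro v
      have h1 : ∑ v' : V, g v' = (Fintype.card V : ℤ) * g v := by
        rw [Finset.sum_congr rfl (fun u _ => hconst u v), Finset.sum_const,
          nsmul_eq_mul, Fintype.card]
      have h2 : ∑ x ∈ Ep, (f x + f (bar x)) = (Ep.card : ℤ) * g v := by
        have : ∀ x ∈ Ep, f x + f (bar x) = g v := fun x _ => by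
          rw [← hgo x]; exact hconst (o x) v
        rw [Finset.sum_congr rfl this, Finset.sum_const, nsmul_eq_mul]
      have h3 : (Fintype.card V : ℤ) * g v = (Ep.card : ℤ) * g v := by
        rw [← h1, ← h2, htotal, hsplitE]
      have h4 : ((Fintype.card V : ℤ) - (Ep.card : ℤ)) * g v = 0 := by ring_nf; linarith
      rcases mul_eq_zero.mp h4 with h5 | h5
      · exfalso; apply hVEp; have := sub_eq_zero.mp h5; exact_mod_cast this
      · exact h5
    have hfbar : ∀ z, f (bar z) = - f z := by
      intro z
      have := hgo z
      rw [hgzero (o z)] at this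
      linarith
    refine ⟨fun x => f x.1, ?_, ?_⟩
    · intro v
      rw [attach_filter_sum' Ep (fun x => f x.1) f (fun x hx => rfl) (fun x => t x = v),
        attach_filter_sum' Ep (fun x => f x.1) f (fun x hx => rfl) (fun x => o x = v)]
      have := split_sum' bar o t hinv hot Ep hEp f hfbar v
      have hgv := hgzero v
      simp only [hg] at hgv
      linarith
    · funext z
      by_cases hz : z ∈ Ep
      · rw [hΦ1 _ z hz]
      · have hb : bar z ∈ Ep := hmem z hz
        have h2 := hΦ2 (fun x => f x.1) (bar z) hb
        rw [hinv] at h2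
        rw [h2]
        rw [hfbar z, neg_neg]
end
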